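/- Generalized Davis–Kahan theorem: Let Â be an n×n real symmetric matrix with eigenvalues λ̂₁ ≥ λ̂₂ ≥ … ≥ λ̂ₙ and corresponding orthonormal eigenvectors ψ̂₁, …, ψ̂ₙ. Fix 1 ≤ l ≤ r ≤ n and set k = r − l + 1; assume g := min{λ̂_{l−1} − λ̂_l, λ̂_r − λ̂_{r+1}} > 0, with the conventions λ̂₀ = +∞ and λ̂_{n+1} = −∞. Let Λ̂ = diag(λ̂_l, …, λ̂_r), let Ψ̂ = (ψ̂_l, …, ψ̂_r) be the n×k matrix of the corresponding eigenvectors, and let Ψ̂_c be the n×(n−k) matrix of the remaining eigenvectors. Let A be any n×n real matrix (not necessarily symmetric), let Λ = diag(λ_l, …, λ_r) with λ_l ≥ … ≥ λ_r, let Ψ be any n×k real matrix, and set Δ = AΨ − ΨΛ. Then ‖Ψ̂_cᵀΨ‖_F ≤ (‖Δ‖_F + √k · ‖Ψ‖ · (‖Â − A‖ + ‖Λ̂ − Λ‖_max)) / g. -/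

import Mathlib

open MeasureTheory Matrix

/-- Frobenius norm of a real matrix. -/
noncomputable def frobNorm {m n : Type*} [Fintype m] [Fintype n] (A : Matrix m n ℝ) : ℝ :=
  Real.sqrt (∑ i, ∑ j, (A i j) ^ 2)

/-- ℓ2 operator norm (largest singular value) of a real matrix. -/
noncomputable def opNorm {m n : Type*} [Fintype m] [Fintype n] [DecidableEq n]
    (A : Matrix m n ℝ) : ℝ :=
  ‖LinearMap.toContinuousLinearMap (Matrix.toEuclideanLin A)‖

/-- Entrywise maximum absolute value of a real matrix. -/
noncomputable def maxNorm {m n : Type*} [Fintype m] [Fintype n] (A : Matrix m n ℝ) : ℝ :=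
  ⨆ i, ⨆ j, |A i j|

/-- Smallest eigenvalue of a real symmetric matrix, via the Rayleigh quotient
(infimum of the quadratic form over the unit sphere). -/
noncomputable def lambdaMin {n : Type*} [Fintype n] (A : Matrix n n ℝ) : ℝ :=
  ⨅ x : {x : n → ℝ // ∑ i, x i ^ 2 = 1}, ∑ i, ∑ j, x.1 i * A i j * x.1 j

/-- Largest eigenvalue of a real symmetric matrix, via the Rayleigh quotient
(supremum of the quadratic form over the unit sphere). -/
noncomputable def lambdaMax {n : Type*} [Fintype n] (A : Matrix n n ℝ) : ℝ :=
  ⨆ x : {x : n → ℝ // ∑ i, x i ^ 2 = 1}, ∑ i, ∑ j, x.1 i * A i j * x.1 j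

/-- Submatrix of `U` assembling the columns indexed by the finite set `ξ`. -/
def colSub {n p : ℕ} (U : Matrix (Fin n) (Fin p) ℝ) (ξ : Finset (Fin p)) :
    Matrix (Fin n) {j : Fin p // j ∈ ξ} ℝ :=
  Matrix.of fun i j => U i j.1

section Aux
variable {m n p : Type*} [Fintype m] [Fintype n] [Fintype p]

lemma frobNorm_nonneg (A : Matrix m n ℝ) : 0 ≤ frobNorm A := Real.sqrt_nonneg _

lemma sq_frobNorm (A : Matrix m n ℝ) : frobNorm A ^ 2 = ∑ i, ∑ j, A i j ^ 2 :=
  Real.sq_sqrt (by positivity)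

lemma frobNorm_le_of_sq_le (A : Matrix m n ℝ) {c : ℝ} (hc : 0 ≤ c)
    (h : ∑ i, ∑ j, A i j ^ 2 ≤ c ^ 2) : frobNorm A ≤ c := by
  calc frobNorm A ≤ Real.sqrt (c ^ 2) := Real.sqrt_le_sqrt h
  _ = c := Real.sqrt_sq hc

lemma frobNorm_eq_norm (A : Matrix m n ℝ) :
    frobNorm A = ‖((WithLp.equiv 2 (m × n → ℝ)).symm fun p => A p.1 p.2 :
      EuclideanSpace ℝ (m × n))‖ := by
  rw [EuclideanSpace.norm_eq, frobNorm]
  congr 1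
  rw [Fintype.sum_prod_type]
  refine Finset.sum_congr rfl fun i _ => Finset.sum_congr rfl fun j _ => ?_
  simp [sq_abs]

lemma frobNorm_add_le (A B : Matrix m n ℝ) :
    frobNorm (A + B) ≤ frobNorm A + frobNorm B := by
  rw [frobNorm_eq_norm, frobNorm_eq_norm A, frobNorm_eq_norm B]
  convert norm_add_le (((WithLp.equiv 2 (m × n → ℝ)).symm fun p => A p.1 p.2 :
    EuclideanSpace ℝ (m × n))) ((WithLp.equiv 2 (m × n → ℝ)).symm fun p => B p.1 p.2) using 2
  · rfl
  · ext x; simp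

lemma opNorm_nonneg [DecidableEq n] (A : Matrix m n ℝ) : 0 ≤ opNorm A := norm_nonneg _

lemma mulVec_sq_sum_le [DecidableEq n] (A : Matrix m n ℝ) (v : n → ℝ) :
    ∑ i, (A.mulVec v i) ^ 2 ≤ opNorm A ^ 2 * ∑ j, v j ^ 2 := by
  have h := (LinearMap.toContinuousLinearMap (Matrix.toEuclideanLin A)).le_opNorm
      ((WithLp.equiv 2 (n → ℝ)).symm v)
  rw [LinearMap.coe_toContinuousLinearMap'] at h
  change ‖((WithLp.equiv 2 (m → ℝ)).symm (A *ᵥ v) : EuclideanSpace ℝ m)‖ ≤ opNorm A *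
    ‖((WithLp.equiv 2 (n → ℝ)).symm v : EuclideanSpace ℝ n)‖ at h
  have h1 : ‖((WithLp.equiv 2 (m → ℝ)).symm (A *ᵥ v) : EuclideanSpace ℝ m)‖
      = Real.sqrt (∑ i, (A.mulVec v i) ^ 2) := by
    rw [EuclideanSpace.norm_eq]; congr 1; refine Finset.sum_congr rfl fun i _ => by simp [sq_abs]
  have h2 : ‖((WithLp.equiv 2 (n → ℝ)).symm v : EuclideanSpace ℝ n)‖
      = Real.sqrt (∑ j, v j ^ 2) := by
    rw [EuclideanSpace.norm_eq]; congr 1; refine Finset.sum_congr rfl fun i _ => by simp [sq_abs]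
  rw [h1, h2] at h
  have h3 := pow_le_pow_left₀ (Real.sqrt_nonneg _) h 2
  rw [Real.sq_sqrt (by positivity), mul_pow, Real.sq_sqrt (by positivity)] at h3
  exact h3

lemma col_sq_sum_le [DecidableEq n] (A : Matrix m n ℝ) (j : n) :
    ∑ i, A i j ^ 2 ≤ opNorm A ^ 2 := by
  have h := mulVec_sq_sum_le A (Pi.single j 1)
  rw [show A *ᵥ Pi.single j 1 = fun i => A i j * 1 by ext i; simp] at h
  simp only [mul_one] at h
  have hs : ∑ j', (Pi.single j 1 : n → ℝ) j' ^ 2 = 1 := by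
    rw [Finset.sum_eq_single j] <;> simp +contextual [Pi.single_apply]
  rw [hs, mul_one] at h
  exact h

lemma abs_le_maxNorm (M : Matrix m n ℝ) (i : m) (j : n) : |M i j| ≤ maxNorm M := by
  have h1 : |M i j| ≤ ⨆ j', |M i j'| :=
    le_ciSup (f := fun j' => |M i j'|) (Set.Finite.bddAbove (Set.finite_range _)) j
  exact h1.trans (le_ciSup (f := fun i' => ⨆ j', |M i' j'|)
    (Set.Finite.bddAbove (Set.finite_range _)) i)

end Aux

/-- Generalized Davis–Kahan theorem.
`Ahat` is an `n × n` real symmetric matrix whose orthonormal eigenvector matrix is `Q`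
(columns are eigenvectors) with eigenvalues `lamHat 0 ≥ lamHat 1 ≥ ⋯` (0-indexed; the
paper's `λ̂ᵢ` is `lamHat (i-1)`).  Fix `1 ≤ l ≤ r ≤ n` and `k = r - l + 1`.  The gap
hypothesis says `0 < g` and `g ≤ λ̂_{l-1} - λ̂_l` whenever `l > 1`, `g ≤ λ̂_r - λ̂_{r+1}`
whenever `r < n` (the `λ̂₀ = +∞`, `λ̂_{n+1} = -∞` conventions make the corresponding
constraints vacuous).  `Ψ̂` consists of columns `l, …, r` of `Q` and `Ψ̂_c` of the
remaining columns; `Λ̂ = diag(λ̂_l, …, λ̂_r)`, `Λ = diag(λ_l, …, λ_r)` with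
`λ_l ≥ ⋯ ≥ λ_r`, `Ψ` is any `n × k` matrix, and `Δ = AΨ - ΨΛ`.  Then
`‖Ψ̂_cᵀΨ‖_F ≤ (‖Δ‖_F + √k ‖Ψ‖ (‖Â - A‖ + ‖Λ̂ - Λ‖_max)) / g`. -/
theorem generalized_davis_kahan
    (n : ℕ) (hn : 0 < n) (l r : ℕ) (hl : 1 ≤ l) (hlr : l ≤ r) (hrn : r ≤ n)
    (k : ℕ) (hk : k = r - l + 1)
    (Ahat : Matrix (Fin n) (Fin n) ℝ) (hAhat : Ahat.IsSymm)
    (lamHat : Fin n → ℝ) (hmono : ∀ i j : Fin n, i ≤ j → lamHat j ≤ lamHat i)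
    (Q : Matrix (Fin n) (Fin n) ℝ) (hQ : Qᵀ * Q = 1)
    (heig : Ahat * Q = Q * Matrix.diagonal lamHat)
    (g : ℝ) (hg : 0 < g)
    (hgl : ∀ h : 1 < l, g ≤ lamHat ⟨l - 2, by omega⟩ - lamHat ⟨l - 1, by omega⟩)
    (hgr : ∀ h : r < n, g ≤ lamHat ⟨r - 1, by omega⟩ - lamHat ⟨r, h⟩)
    (A : Matrix (Fin n) (Fin n) ℝ)
    (lam : Fin k → ℝ) (hlam : ∀ i j : Fin k, i ≤ j → lam j ≤ lam i)
    (Psi : Matrix (Fin n) (Fin k) ℝ)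
    (Δ : Matrix (Fin n) (Fin k) ℝ)
    (hΔ : Δ = A * Psi - Psi * Matrix.diagonal lam) :
    frobNorm (Matrix.of fun (i : {i : Fin n // (i : ℕ) + 1 < l ∨ r < (i : ℕ) + 1})
        (j : Fin k) => ∑ m, Q m i.1 * Psi m j) ≤
      (frobNorm Δ + Real.sqrt k * opNorm Psi *
        (opNorm (Ahat - A) +
          maxNorm (Matrix.diagonal (fun j : Fin k =>
              lamHat ⟨l - 1 + (j : ℕ), by omega⟩) - Matrix.diagonal lam))) / g := by
  classical
  have hk1 : 0 < k := by omega
  set lamB : Fin k → ℝ := fun j : Fin k => lamHat ⟨l - 1 + (j : ℕ), by omega⟩ with hlamB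
  show frobNorm (Matrix.of fun (i : {i : Fin n // (i : ℕ) + 1 < l ∨ r < (i : ℕ) + 1})
        (j : Fin k) => ∑ m, Q m i.1 * Psi m j) ≤
      (frobNorm Δ + Real.sqrt k * opNorm Psi *
        (opNorm (Ahat - A) +
          maxNorm (Matrix.diagonal lamB - Matrix.diagonal lam))) / g
  set N : ℝ := maxNorm (Matrix.diagonal lamB - Matrix.diagonal lam) with hNdef
  set P : Matrix (Fin n) (Fin k) ℝ := Qᵀ * Psi with hP
  set D' : Matrix (Fin n) (Fin k) ℝ := Ahat * Psi - Psi * Matrix.diagonal lamB with hD'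
  set E : Matrix (Fin n) (Fin k) ℝ := Qᵀ * D' with hEdef
  have hN0 : 0 ≤ N :=
    le_trans (abs_nonneg _) (abs_le_maxNorm _ (⟨0, hk1⟩ : Fin k) (⟨0, hk1⟩ : Fin k))
  -- Qᵀ Ahat = diag lamHat * Qᵀ
  have hQA : Qᵀ * Ahat = Matrix.diagonal lamHat * Qᵀ := by
    have h := congrArg Matrix.transpose heig
    rw [Matrix.transpose_mul, Matrix.transpose_mul, Matrix.diagonal_transpose, hAhat] at h
    exact h
  have hEentry : ∀ (i : Fin n) (j : Fin k), E i j = (lamHat i - lamB j) * P i j := by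
    intro i j
    have h1 : E = Matrix.diagonal lamHat * P - P * Matrix.diagonal lamB := by
      rw [hEdef, hD', hP]
      calc Qᵀ * (Ahat * Psi - Psi * Matrix.diagonal lamB)
          = Qᵀ * (Ahat * Psi) - Qᵀ * (Psi * Matrix.diagonal lamB) := Matrix.mul_sub _ _ _
        _ = (Qᵀ * Ahat) * Psi - (Qᵀ * Psi) * Matrix.diagonal lamB := by
            rw [Matrix.mul_assoc, Matrix.mul_assoc]
        _ = Matrix.diagonal lamHat * (Qᵀ * Psi) - (Qᵀ * Psi) * Matrix.diagonal lamB := by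
            rw [hQA, Matrix.mul_assoc]
    rw [h1]
    simp only [Matrix.sub_apply, Matrix.diagonal_mul, Matrix.mul_diagonal]
    ring
  -- gap bound
  have hgap : ∀ (i : Fin n), ((i : ℕ) + 1 < l ∨ r < (i : ℕ) + 1) → ∀ j : Fin k,
      g ≤ |lamHat i - lamB j| := by
    intro i hi j
    have hjk : (j : ℕ) < k := j.2
    have hin : (i : ℕ) < n := i.2
    rcases hi with hi | hi
    · have h2 : 1 < l := by omega
      have ha : lamHat ⟨l - 2, by omega⟩ ≤ lamHat i :=
        hmono i ⟨l - 2, by omega⟩ (by rw [Fin.le_def]; simp; omega)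
      have hb : lamB j ≤ lamHat ⟨l - 1, by omega⟩ :=
        hmono ⟨l - 1, by omega⟩ ⟨l - 1 + (j : ℕ), by omega⟩ (by rw [Fin.le_def]; simp)
      have hc := hgl h2
      rw [abs_of_nonneg (by linarith)]
      linarith
    · have h2 : r < n := by omega
      have ha : lamHat i ≤ lamHat ⟨r, h2⟩ :=
        hmono ⟨r, h2⟩ i (by rw [Fin.le_def]; simp; omega)
      have hb : lamHat ⟨r - 1, by omega⟩ ≤ lamB j :=
        hmono ⟨l - 1 + (j : ℕ), by omega⟩ ⟨r - 1, by omega⟩ (by rw [Fin.le_def]; simp; omega)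
      have hc := hgr h2
      rw [abs_sub_comm, abs_of_nonneg (by linarith)]
      linarith
  have hpt : ∀ (i : Fin n), ((i : ℕ) + 1 < l ∨ r < (i : ℕ) + 1) → ∀ j : Fin k,
      g ^ 2 * P i j ^ 2 ≤ E i j ^ 2 := by
    intro i hi j
    rw [hEentry i j, mul_pow]
    have h1 : g ^ 2 ≤ (lamHat i - lamB j) ^ 2 := by
      calc g ^ 2 ≤ |lamHat i - lamB j| ^ 2 := pow_le_pow_left₀ hg.le (hgap i hi j) 2
      _ = (lamHat i - lamB j) ^ 2 := sq_abs _
    exact mul_le_mul_of_nonneg_right h1 (sq_nonneg _)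
  -- sum over the complement block
  set SM : ℝ := ∑ i : {i : Fin n // (i : ℕ) + 1 < l ∨ r < (i : ℕ) + 1}, ∑ j, P i.1 j ^ 2
    with hSM
  have hSM0 : 0 ≤ SM := by positivity
  have hsum1 : g ^ 2 * SM ≤ ∑ i : {i : Fin n // (i : ℕ) + 1 < l ∨ r < (i : ℕ) + 1},
      ∑ j, E i.1 j ^ 2 := by
    rw [hSM, Finset.mul_sum]
    refine Finset.sum_le_sum fun i _ => ?_
    rw [Finset.mul_sum]
    exact Finset.sum_le_sum fun j _ => hpt i.1 i.2 j
  have hsum2 : ∑ i : {i : Fin n // (i : ℕ) + 1 < l ∨ r < (i : ℕ) + 1}, ∑ j, E i.1 j ^ 2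
      ≤ ∑ i, ∑ j, E i j ^ 2 := by
    rw [← Finset.sum_subtype
      (Finset.univ.filter (fun i : Fin n => (i : ℕ) + 1 < l ∨ r < (i : ℕ) + 1))
      (by simp) (fun i => ∑ j, E i j ^ 2)]
    exact Finset.sum_le_sum_of_subset_of_nonneg (Finset.filter_subset _ _)
      (fun i _ _ => by positivity)
  have hEE : ∑ i, ∑ j, E i j ^ 2 = ∑ i, ∑ j, D' i j ^ 2 := by
    have hQQ : Q * Qᵀ = 1 := mul_eq_one_comm.mp hQ
    have h1 : Eᵀ * E = D'ᵀ * D' := by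
      rw [hEdef, Matrix.transpose_mul, Matrix.transpose_transpose, Matrix.mul_assoc,
        ← Matrix.mul_assoc Q, hQQ, Matrix.one_mul]
    have e1 : ∀ X : Matrix (Fin n) (Fin k) ℝ, ∑ i, ∑ j, X i j ^ 2 = ∑ j, (Xᵀ * X) j j := by
      intro X
      rw [Finset.sum_comm]
      refine Finset.sum_congr rfl fun j _ => ?_
      simp [Matrix.mul_apply, pow_two]
    rw [e1, e1, h1]
  -- g * frobNorm(block of P) ≤ frobNorm D'
  have hMD : Real.sqrt SM ≤ frobNorm D' / g := by
    rw [le_div_iff₀ hg]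
    have key : g ^ 2 * SM ≤ ∑ i, ∑ j, D' i j ^ 2 := by
      rw [← hEE]; exact le_trans hsum1 hsum2
    calc Real.sqrt SM * g = Real.sqrt (g ^ 2 * SM) := by
          rw [Real.sqrt_mul (sq_nonneg g), Real.sqrt_sq hg.le, mul_comm]
    _ ≤ Real.sqrt (∑ i, ∑ j, D' i j ^ 2) := Real.sqrt_le_sqrt key
    _ = frobNorm D' := rfl
  -- decomposition
  have hD'decomp : D' = Δ + ((Ahat - A) * Psi
      + Psi * (Matrix.diagonal lam - Matrix.diagonal lamB)) := by
    rw [hΔ, hD', Matrix.sub_mul, Matrix.mul_sub]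
    abel
  -- Frobenius norm of Psi
  have hPsiF : frobNorm Psi ≤ Real.sqrt k * opNorm Psi := by
    apply frobNorm_le_of_sq_le _ (mul_nonneg (Real.sqrt_nonneg _) (opNorm_nonneg _))
    rw [mul_pow, Real.sq_sqrt (Nat.cast_nonneg k), Finset.sum_comm]
    calc ∑ j, ∑ i, Psi i j ^ 2 ≤ ∑ _j : Fin k, opNorm Psi ^ 2 :=
          Finset.sum_le_sum fun j _ => col_sq_sum_le Psi j
    _ = (k : ℝ) * opNorm Psi ^ 2 := by
          rw [Finset.sum_const, Finset.card_univ, Fintype.card_fin, nsmul_eq_mul]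
  have hT1 : frobNorm ((Ahat - A) * Psi) ≤ opNorm (Ahat - A) * frobNorm Psi := by
    apply frobNorm_le_of_sq_le _ (mul_nonneg (opNorm_nonneg _) (frobNorm_nonneg _))
    rw [mul_pow, sq_frobNorm, Finset.sum_comm]
    have hj : ∀ j, ∑ i, ((Ahat - A) * Psi) i j ^ 2
        ≤ opNorm (Ahat - A) ^ 2 * ∑ i, Psi i j ^ 2 := by
      intro j
      have h := mulVec_sq_sum_le (Ahat - A) (fun m => Psi m j)
      simpa [Matrix.mulVec, Matrix.mul_apply, dotProduct] using h
    calc ∑ j, ∑ i, ((Ahat - A) * Psi) i j ^ 2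
        ≤ ∑ j, opNorm (Ahat - A) ^ 2 * ∑ i, Psi i j ^ 2 := Finset.sum_le_sum fun j _ => hj j
    _ = opNorm (Ahat - A) ^ 2 * ∑ i, ∑ j, Psi i j ^ 2 := by
        rw [← Finset.mul_sum, Finset.sum_comm]
  have hT2 : frobNorm (Psi * (Matrix.diagonal lam - Matrix.diagonal lamB))
      ≤ opNorm Psi * (Real.sqrt k * N) := by
    apply frobNorm_le_of_sq_le _
      (mul_nonneg (opNorm_nonneg _) (mul_nonneg (Real.sqrt_nonneg _) hN0))
    rw [mul_pow, mul_pow, Real.sq_sqrt (Nat.cast_nonneg k), Finset.sum_comm]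
    have hdj : ∀ j : Fin k, (lam j - lamB j) ^ 2 ≤ N ^ 2 := by
      intro j
      have h1 : |lam j - lamB j| ≤ N := by
        rw [abs_sub_comm]
        have h2 := abs_le_maxNorm (Matrix.diagonal lamB - Matrix.diagonal lam) j j
        rw [Matrix.sub_apply, Matrix.diagonal_apply_eq, Matrix.diagonal_apply_eq] at h2
        exact h2
      calc (lam j - lamB j) ^ 2 = |lam j - lamB j| ^ 2 := (sq_abs _).symm
      _ ≤ N ^ 2 := pow_le_pow_left₀ (abs_nonneg _) h1 2
    calc ∑ j, ∑ i, (Psi * (Matrix.diagonal lam - Matrix.diagonal lamB)) i j ^ 2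
        = ∑ j, (lam j - lamB j) ^ 2 * ∑ i, Psi i j ^ 2 := by
          refine Finset.sum_congr rfl fun j _ => ?_
          rw [Finset.mul_sum]
          refine Finset.sum_congr rfl fun i _ => ?_
          rw [Matrix.diagonal_sub, Matrix.mul_diagonal]
          ring
    _ ≤ ∑ _j : Fin k, N ^ 2 * opNorm Psi ^ 2 := by
          refine Finset.sum_le_sum fun j _ => ?_
          exact mul_le_mul (hdj j) (col_sq_sum_le Psi j)
            (Finset.sum_nonneg fun i _ => sq_nonneg _) (sq_nonneg _)
    _ = opNorm Psi ^ 2 * ((k : ℝ) * N ^ 2) := by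
          rw [Finset.sum_const, Finset.card_univ, Fintype.card_fin, nsmul_eq_mul]; ring
  -- assemble bound on frobNorm D'
  have h6 : frobNorm D' ≤ frobNorm Δ + Real.sqrt k * opNorm Psi * (opNorm (Ahat - A) + N) := by
    have t1 : frobNorm D' ≤ frobNorm Δ + frobNorm ((Ahat - A) * Psi
        + Psi * (Matrix.diagonal lam - Matrix.diagonal lamB)) := by
      rw [hD'decomp]; exact frobNorm_add_le _ _
    have t2 := frobNorm_add_le ((Ahat - A) * Psi)
      (Psi * (Matrix.diagonal lam - Matrix.diagonal lamB))
    have t3 : opNorm (Ahat - A) * frobNorm Psi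
        ≤ opNorm (Ahat - A) * (Real.sqrt k * opNorm Psi) :=
      mul_le_mul_of_nonneg_left hPsiF (opNorm_nonneg _)
    nlinarith [hT1, hT2, t1, t2, t3]
  -- the goal matrix equals block of P
  have hMeq : frobNorm (Matrix.of fun (i : {i : Fin n // (i : ℕ) + 1 < l ∨ r < (i : ℕ) + 1})
      (j : Fin k) => ∑ m, Q m i.1 * Psi m j) = Real.sqrt SM := by
    rw [hSM, frobNorm]
    congr 1
  rw [hMeq]
  exact le_trans hMD (div_le_div_of_nonneg_right h6 hg.le)
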